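/- Let X be a Hilbert space, M₁, M₂ closed subspaces with orthogonal projections P₁, P₂, and let T = P₂P₁ + (I - P₂)(I - P₁) be the Douglas–Rachford operator. Then Fix T = (M₁ ∩ M₂) ⊕ (M₁^⊥ ∩ M₂^⊥). -/

import Mathlib

local notation "⟪" x ", " y "⟫" => @inner ℂ _ _ x y

/-- For the Douglas–Rachford operator `T = P₂P₁ + (I - P₂)(I - P₁)` associated with closed
subspaces `M₁, M₂` of a Hilbert space, `Fix T = (M₁ ∩ M₂) ⊕ (M₁^⊥ ∩ M₂^⊥)`. -/
theorem stmt18 {X : Type*} [NormedAddCommGroup X] [InnerProductSpace ℂ X] [CompleteSpace X]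
    (M₁ M₂ : Submodule ℂ X) [CompleteSpace M₁] [CompleteSpace M₂]
    (P₁ P₂ T : X →L[ℂ] X)
    (hP₁ : P₁ = M₁.subtypeL ∘L M₁.orthogonalProjectionOnto)
    (hP₂ : P₂ = M₂.subtypeL ∘L M₂.orthogonalProjectionOnto)
    (hT : T = P₂ * P₁ + (1 - P₂) * (1 - P₁)) :
    LinearMap.ker ((1 - T : X →L[ℂ] X) : X →ₗ[ℂ] X) = (M₁ ⊓ M₂) ⊔ (M₁ᗮ ⊓ M₂ᗮ) ∧
    Disjoint (M₁ ⊓ M₂) (M₁ᗮ ⊓ M₂ᗮ) := by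
  have mem1 : ∀ x, P₁ x ∈ M₁ := by intro x; rw [hP₁]; exact (M₁.orthogonalProjectionOnto x).2
  have mem2 : ∀ x, P₂ x ∈ M₂ := by intro x; rw [hP₂]; exact (M₂.orthogonalProjectionOnto x).2
  have orth1 : ∀ x, x - P₁ x ∈ M₁ᗮ := by
    intro x; rw [hP₁]; exact M₁.sub_starProjection_mem_orthogonal x
  have orth2 : ∀ x, x - P₂ x ∈ M₂ᗮ := by
    intro x; rw [hP₂]; exact M₂.sub_starProjection_mem_orthogonal x
  have eq1 : ∀ x ∈ M₁, P₁ x = x := by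
    intro x hx; rw [hP₁]; exact M₁.starProjection_eq_self_iff.2 hx
  have eq2 : ∀ x ∈ M₂, P₂ x = x := by
    intro x hx; rw [hP₂]; exact M₂.starProjection_eq_self_iff.2 hx
  have zero1 : ∀ x ∈ M₁ᗮ, P₁ x = 0 := by
    intro x hx; rw [hP₁]
    simp [Submodule.orthogonalProjectionOnto_apply_of_mem_orthogonal hx]
  have zero2 : ∀ x ∈ M₂ᗮ, P₂ x = 0 := by
    intro x hx; rw [hP₂]
    simp [Submodule.orthogonalProjectionOnto_apply_of_mem_orthogonal hx]
  have adj2 : ∀ x y : X, ⟪P₂ x, y⟫ = ⟪x, P₂ y⟫ := by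
    intro x y; rw [hP₂]; exact M₂.inner_starProjection_left_eq_right x y
  have hTx : ∀ x, T x = P₂ (P₁ x) + (x - P₁ x - (P₂ x - P₂ (P₁ x))) := by
    intro x; rw [hT]
    simp only [ContinuousLinearMap.add_apply, ContinuousLinearMap.mul_apply,
      ContinuousLinearMap.sub_apply, ContinuousLinearMap.one_apply, map_sub]
    abel
  constructor
  · ext x
    simp only [LinearMap.mem_ker, ContinuousLinearMap.coe_sub', ContinuousLinearMap.sub_apply, Pi.sub_apply,
      ContinuousLinearMap.one_apply, LinearMap.coe_coe, ContinuousLinearMap.coe_coe, sub_eq_zero]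
    constructor
    · intro hx
      -- hx : x = T x
      have key : P₂ (P₁ x) + P₂ (P₁ x) = P₁ x + P₂ x := by
        have h := hx
        rw [hTx x] at h
        have h' : P₂ (P₁ x) + P₂ (P₁ x) - (P₁ x + P₂ x)
            = (P₂ (P₁ x) + (x - P₁ x - (P₂ x - P₂ (P₁ x)))) - x := by abel
        exact sub_eq_zero.1 (h'.trans (sub_eq_zero.2 h.symm))
      -- inner products
      have i1 : ⟪P₁ x, x⟫ = ⟪P₁ x, P₁ x⟫ := by
        have h := (Submodule.mem_orthogonal M₁ (x - P₁ x)).1 (orth1 x) (P₁ x) (mem1 x)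
        rw [inner_sub_right] at h
        linear_combination h
      have i2 : ⟪P₂ x, x⟫ = ⟪P₂ x, P₂ x⟫ := by
        have h := (Submodule.mem_orthogonal M₂ (x - P₂ x)).1 (orth2 x) (P₂ x) (mem2 x)
        rw [inner_sub_right] at h
        linear_combination h
      have i3 : ⟪P₂ (P₁ x), x⟫ = ⟪P₁ x, P₂ x⟫ := adj2 (P₁ x) x
      have hsum : ⟪P₁ x, P₂ x⟫ + ⟪P₁ x, P₂ x⟫ = ⟪P₁ x, P₁ x⟫ + ⟪P₂ x, P₂ x⟫ := by
        have := congrArg (fun v => ⟪v, x⟫) key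
        simp only [inner_add_left] at this
        rw [i1, i2, i3] at this
        exact this
      have hab : P₁ x = P₂ x := by
        have h0 : ⟪P₁ x - P₂ x, P₁ x - P₂ x⟫ = ⟪P₁ x, P₂ x⟫ - ⟪P₂ x, P₁ x⟫ := by
          simp only [inner_sub_left, inner_sub_right]
          linear_combination -hsum
        have hre : (⟪P₁ x - P₂ x, P₁ x - P₂ x⟫ : ℂ).re = 0 := by
          rw [h0]
          have : (⟪P₂ x, P₁ x⟫ : ℂ) = starRingEnd ℂ ⟪P₁ x, P₂ x⟫ := (inner_conj_symm _ _).symm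
          rw [this, Complex.sub_re, Complex.conj_re, sub_self]
        have : RCLike.re (⟪P₁ x - P₂ x, P₁ x - P₂ x⟫ : ℂ) ≤ 0 := le_of_eq hre
        exact sub_eq_zero.1 (re_inner_self_nonpos.1 this)
      have hPP : P₂ (P₁ x) = P₁ x := by
        have : P₂ (P₁ x) + P₂ (P₁ x) = P₁ x + P₁ x := by rw [key, hab]
        have h2 : (2 : ℂ) • P₂ (P₁ x) = (2 : ℂ) • P₁ x := by
          rw [two_smul, two_smul]; exact this
        exact smul_right_injective X (by norm_num) h2
      have hm : P₁ x ∈ M₁ ⊓ M₂ := ⟨mem1 x, by rw [← hPP]; exact mem2 (P₁ x)⟩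
      have hm' : x - P₁ x ∈ M₁ᗮ ⊓ M₂ᗮ := ⟨orth1 x, by rw [hab]; exact orth2 x⟩
      have : x = P₁ x + (x - P₁ x) := by abel
      rw [this]
      exact Submodule.add_mem_sup hm hm'
    · intro hx
      obtain ⟨y, hy, z, hz, rfl⟩ := Submodule.mem_sup.1 hx
      have hy1 := eq1 y hy.1
      have hy2 := eq2 y hy.2
      have hz1 := zero1 z hz.1
      have hz2 := zero2 z hz.2
      rw [hTx]
      simp only [map_add, hy1, hy2, hz1, hz2, map_zero, add_zero]
      abel
  · rw [Submodule.disjoint_def]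
    intro x hx hx'
    have := (Submodule.mem_orthogonal M₁ x).1 hx'.1 x hx.1
    exact inner_self_eq_zero.1 this
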